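/- For every acceptance level α with 0 < α < e^{-1}, there exists a unique γ in the open interval (0,1) satisfying γ·α^{γ-1} = 1. -/

import Mathlib

theorem stmt_0 (α : ℝ) (hα0 : 0 < α) (hα1 : α < Real.exp (-1)) :
    ∃! γ : ℝ, γ ∈ Set.Ioo (0:ℝ) 1 ∧ γ * α ^ (γ - 1) = 1 := by
  have hL : Real.log α < -1 := by
    have h := Real.log_lt_log hα0 hα1
    rwa [Real.log_exp] at h
  set L := Real.log α with hLdef
  set t : ℝ := -L with htdef
  have ht1 : 1 < t := by rw [htdef]; linarith
  have ht0 : 0 < t := by linarith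
  set g : ℝ → ℝ := fun x => Real.log x + (x - 1) * L with hg
  have hderiv : ∀ x : ℝ, 0 < x → HasDerivAt g (x⁻¹ + L) x := by
    intro x hx
    have h1 := Real.hasDerivAt_log (ne_of_gt hx)
    have h2 : HasDerivAt (fun x : ℝ => (x - 1) * L) L x := by
      simpa using ((hasDerivAt_id x).sub_const 1).mul_const L
    exact h1.add h2
  have hcont : ∀ s : Set ℝ, s ⊆ Set.Ioi 0 → ContinuousOn g s := by
    intro s hs x hx
    exact (hderiv x (hs hx)).continuousAt.continuousWithinAt
  have hinv0 : (0:ℝ) < 1 / t := by positivity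
  have hinv1 : (1:ℝ) / t < 1 := by
    rw [div_lt_one ht0]; exact ht1
  have hαt : α < 1 / t := by
    have hexp : α = Real.exp (-t) := by
      rw [htdef, neg_neg, hLdef, Real.exp_log hα0]
    have h1 : t < Real.exp t := by
      have := Real.add_one_le_exp t; linarith
    have h2 : t * Real.exp (-t) < Real.exp t * Real.exp (-t) :=
      mul_lt_mul_of_pos_right h1 (Real.exp_pos _)
    rw [← Real.exp_add, add_neg_cancel, Real.exp_zero] at h2
    rw [hexp, lt_div_iff₀ ht0, mul_comm]
    exact h2
  have hgα : g α < 0 := by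
    have : g α = α * L := by rw [hg]; simp only [← hLdef]; ring
    rw [this]
    exact mul_neg_of_pos_of_neg hα0 (by linarith)
  have hg1t : 0 < g (1 / t) := by
    have hlog : Real.log (1 / t) = -Real.log t := by
      rw [one_div, Real.log_inv]
    have hmul : (1 / t - 1) * L = t - 1 := by
      rw [htdef]
      have hL0 : L ≠ 0 := ne_of_lt (by linarith)
      field_simp
      ring
    have hlt : Real.log t < t - 1 := Real.log_lt_sub_one_of_pos ht0 (ne_of_gt ht1)
    show 0 < Real.log (1 / t) + (1 / t - 1) * L
    rw [hlog, hmul]; linarith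
  have hg1 : g 1 = 0 := by rw [hg]; simp
  -- strict monotonicity on Ioc 0 (1/t)
  have hmono : StrictMonoOn g (Set.Ioc 0 (1 / t)) := by
    apply strictMonoOn_of_deriv_pos (convex_Ioc _ _)
      (hcont _ (fun x hx => hx.1))
    intro x hx
    rw [interior_Ioc] at hx
    rw [(hderiv x hx.1).deriv]
    have : t < x⁻¹ := by
      rw [← one_div]
      rw [lt_div_iff₀ hx.1, mul_comm]
      exact (lt_div_iff₀ ht0).mp hx.2
    linarith
  -- strict antitonicity on Icc (1/t) 1
  have hanti : StrictAntiOn g (Set.Icc (1 / t) 1) := by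
    apply strictAntiOn_of_deriv_neg (convex_Icc _ _)
      (hcont _ (fun x hx => lt_of_lt_of_le hinv0 hx.1))
    intro x hx
    rw [interior_Icc] at hx
    have hx0 : 0 < x := lt_trans hinv0 hx.1
    rw [(hderiv x hx0).deriv]
    have : x⁻¹ < t := by
      rw [← one_div]
      rw [div_lt_iff₀ hx0, mul_comm]
      exact (div_lt_iff₀ ht0).mp hx.1
    linarith
  -- equation equivalence
  have hiff : ∀ γ : ℝ, 0 < γ → (γ * α ^ (γ - 1) = 1 ↔ g γ = 0) := by
    intro γ hγ
    have key : γ * α ^ (γ - 1) = Real.exp (g γ) := by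
      rw [Real.rpow_def_of_pos hα0, hg]
      show γ * Real.exp (L * (γ - 1)) = Real.exp (Real.log γ + (γ - 1) * L)
      rw [Real.exp_add, Real.exp_log hγ, mul_comm (γ - 1) L]
    rw [key, Real.exp_eq_one_iff]
  -- any root in Ioo 0 1 lies in Ioc 0 (1/t)
  have hroot_loc : ∀ γ : ℝ, γ ∈ Set.Ioo (0:ℝ) 1 → g γ = 0 → γ ∈ Set.Ioc 0 (1 / t) := by
    intro γ hγ hgγ
    refine ⟨hγ.1, ?_⟩
    by_contra h
    push_neg at h
    have hγmem : γ ∈ Set.Icc (1 / t) 1 := ⟨le_of_lt h, le_of_lt hγ.2⟩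
    have h1mem : (1:ℝ) ∈ Set.Icc (1 / t) 1 := ⟨le_of_lt hinv1, le_refl 1⟩
    have := hanti hγmem h1mem hγ.2
    rw [hg1, hgγ] at this
    exact lt_irrefl 0 this
  -- existence via IVT
  obtain ⟨c, hc, hgc⟩ : ∃ c ∈ Set.Ioo α (1 / t), g c = 0 := by
    have := intermediate_value_Ioo (le_of_lt hαt)
      (hcont _ (fun x hx => lt_of_lt_of_le hα0 hx.1))
    have h0 : (0:ℝ) ∈ Set.Ioo (g α) (g (1 / t)) := ⟨hgα, hg1t⟩
    obtain ⟨c, hc, hgc⟩ := this h0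
    exact ⟨c, hc, hgc⟩
  have hcmem : c ∈ Set.Ioo (0:ℝ) 1 :=
    ⟨lt_trans hα0 hc.1, lt_trans hc.2 hinv1⟩
  refine ⟨c, ⟨hcmem, (hiff c hcmem.1).mpr hgc⟩, ?_⟩
  rintro y ⟨hy, hyeq⟩
  have hgy : g y = 0 := (hiff y hy.1).mp hyeq
  exact hmono.injOn (hroot_loc y hy hgy) (hroot_loc c hcmem hgc) (by rw [hgy, hgc])
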